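/- Let F be a graph with chromatic number χ(F) ≥ 3 such that σ(F) = ∞, let k ≥ 2 and n ≥ 9(k²+k+1)+2v(F). Let G be a {kP₃, F}-free graph on n vertices with e(G) = ex(n,{kP₃,F}), and let A ⊆ V(G) be a set of k−1 vertices each of degree at least n/9 in G. Then every vertex of V(G)∖A is adjacent to all vertices of A, and the number of edges of the induced subgraph G[V(G)∖A] equals ⌊(n−k+1)/2⌋. -/

import Mathlib

open SimpleGraph

/-- `G` contains a (not necessarily induced) subgraph copy of `H`. -/
def GContains {V W : Type*} (G : SimpleGraph V) (H : SimpleGraph W) : Prop :=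
  ∃ f : W ↪ V, ∀ a b, H.Adj a b → G.Adj (f a) (f b)

/-- The number of edges of a graph. -/
noncomputable def eCount {V : Type*} (G : SimpleGraph V) : ℕ := G.edgeSet.ncard

/-- The Turán number of a "freeness" predicate `P` : the maximum number of edges of a
graph on `n` vertices satisfying `P`. -/
noncomputable def exNum (n : ℕ) (P : SimpleGraph (Fin n) → Prop) : ℕ :=
  sSup {m | ∃ G : SimpleGraph (Fin n), P G ∧ eCount G = m}

/-- The disjoint union of `k` copies of the path on `ℓ` vertices. -/
def kPaths (k ℓ : ℕ) : SimpleGraph (Fin k × Fin ℓ) where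
  Adj x y := x.1 = y.1 ∧ ((x.2 : ℕ) + 1 = (y.2 : ℕ) ∨ (y.2 : ℕ) + 1 = (x.2 : ℕ))
  symm := ⟨fun x y h => ⟨h.1.symm, h.2.symm⟩⟩
  loopless := ⟨fun x h => by obtain ⟨-, h⟩ := h; omega⟩

/-- The linear forest with one path on `len i` vertices for each `i ∈ s`. -/
def linearForest (s : Finset ℕ) (len : ℕ → ℕ) :
    SimpleGraph {p : ℕ × ℕ // p.1 ∈ s ∧ p.2 < len p.1} where
  Adj x y := x.val.1 = y.val.1 ∧ (x.val.2 + 1 = y.val.2 ∨ y.val.2 + 1 = x.val.2)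
  symm := ⟨fun x y h => ⟨h.1.symm, h.2.symm⟩⟩
  loopless := ⟨fun x h => by obtain ⟨-, h⟩ := h; omega⟩

/-- The join `I_a + M_m` of an independent set of `a` vertices with a perfect matching
on `2m` vertices (vertices `2t` and `2t+1` are matched). -/
def joinIM (a m : ℕ) : SimpleGraph (Fin a ⊕ Fin (2 * m)) where
  Adj x y :=
    match x, y with
    | Sum.inl _, Sum.inr _ => True
    | Sum.inr _, Sum.inl _ => True
    | Sum.inl _, Sum.inl _ => False
    | Sum.inr i, Sum.inr j => i ≠ j ∧ (i : ℕ) / 2 = (j : ℕ) / 2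
  symm := by
    constructor
    rintro (x | x) (y | y) h
    · exact h.elim
    · trivial
    · trivial
    · exact ⟨h.1.symm, h.2.symm⟩
  loopless := by
    constructor
    rintro (x | x) h
    · exact h
    · exact h.1 rfl

/-- `E'` is an edge control set of `F`: a set of edges of `F` such that every other edge of
`F` shares an endpoint with some edge of `E'`. -/
def IsEdgeControlSet {V : Type*} (F : SimpleGraph V) (E' : Finset (Sym2 V)) : Prop :=
  (E' : Set (Sym2 V)) ⊆ F.edgeSet ∧
    ∀ e ∈ F.edgeSet, e ∉ E' → ∃ e' ∈ E', ∃ v, v ∈ e ∧ v ∈ e'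

/-- The edge control number `β₁(F)`: the minimum size of an edge control set of `F`. -/
noncomputable def edgeControlNumber {V : Type*} (F : SimpleGraph V) : ℕ :=
  sInf {m | ∃ E' : Finset (Sym2 V), IsEdgeControlSet F E' ∧ E'.card = m}

/-- The number of triangles (copies of `K₃`) in `F`. -/
noncomputable def triCount {V : Type*} (F : SimpleGraph V) : ℕ :=
  {t : Finset V | F.IsNClique 3 t}.ncard

/-- `G` contains no member of the family `𝒢₁(F) = {F[V(F) ∖ S] : S ⊆ V(F), F[S] edgeless}`. -/
def G1FamFree {VF V : Type*} (F : SimpleGraph VF) (G : SimpleGraph V) : Prop :=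
  ∀ S : Set VF, (∀ a ∈ S, ∀ b ∈ S, ¬ F.Adj a b) → ¬ GContains G (F.induce Sᶜ)

/-- `G` contains no member of the family `𝒢₂(F) = {F[V(F) ∖ S] : S ⊆ V(F), e(F[S]) ≤ 1}`. -/
def G2FamFree {VF V : Type*} (F : SimpleGraph VF) (G : SimpleGraph V) : Prop :=
  ∀ S : Set VF, eCount (F.induce S) ≤ 1 → ¬ GContains G (F.induce Sᶜ)

/-- `G` contains no member of the family
`𝓗ᵢ(F) = {F[V(F) ∖ S] : S ⊆ V(F), Δ(F[S]) ≤ 1, e(F[S]) ≤ i}`. -/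
def HiFamFree {VF V : Type*} (F : SimpleGraph VF) (i : ℕ) (G : SimpleGraph V) : Prop :=
  ∀ S : Set VF, (∀ v ∈ S, (F.neighborSet v ∩ S).ncard ≤ 1) →
    eCount (F.induce S) ≤ i → ¬ GContains G (F.induce Sᶜ)

/-- `G` contains no member of the family `𝓗(F) = {F[V(F) ∖ S] : S ⊆ V(F), Δ(F[S]) ≤ 1}`. -/
def HFamFree {VF V : Type*} (F : SimpleGraph VF) (G : SimpleGraph V) : Prop :=
  ∀ S : Set VF, (∀ v ∈ S, (F.neighborSet v ∩ S).ncard ≤ 1) →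
    ¬ GContains G (F.induce Sᶜ)

/-- The common neighborhood of `S` outside `S`. -/
def commonNbhd {V : Type*} (G : SimpleGraph V) (S : Set V) : Set V :=
  {v | v ∉ S ∧ ∀ u ∈ S, G.Adj v u}

/-- The quantity `n_k = (n/3 − C(ℓ,2)) / ((⌈ℓ/2⌉+1)·C(ℓ,⌊ℓ/2⌋)) + kℓ`. -/
noncomputable def nkQ (n k ℓ : ℕ) : ℚ :=
  ((n : ℚ) / 3 - (ℓ.choose 2 : ℚ)) /
    ((((ℓ + 1) / 2 + 1 : ℕ) : ℚ) * (ℓ.choose (ℓ / 2) : ℚ)) + (k : ℚ) * (ℓ : ℚ)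

/-- The set of vertices belonging to some `⌊ℓ/2⌋`-set whose common neighborhood outside it
has size at least `n_k`. -/
def bigA (n k ℓ : ℕ) (G : SimpleGraph (Fin n)) : Set (Fin n) :=
  {v | ∃ S : Finset (Fin n), v ∈ S ∧ S.card = ℓ / 2 ∧
    nkQ n k ℓ ≤ ((commonNbhd G ↑S).ncard : ℚ)}


section Helpers
open Finset

lemma eCount_eq_card {V : Type*} [Fintype V] (G : SimpleGraph V) [DecidableRel G.Adj] :
    eCount G = G.edgeFinset.card := by
  rw [eCount, Set.ncard_eq_toFinset_card']
  congr 1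

lemma card_edges_eq_lowPairs {V : Type*} [Fintype V] [LinearOrder V] (G : SimpleGraph V)
    [DecidableRel G.Adj] :
    G.edgeFinset.card =
      ((univ ×ˢ univ).filter (fun p : V × V => p.1 < p.2 ∧ G.Adj p.1 p.2)).card := by
  symm
  refine Finset.card_bij (fun p _ => Sym2.mk p.1 p.2) ?_ ?_ ?_
  · rintro ⟨a, b⟩ hp
    simp only [mem_filter] at hp
    simpa [SimpleGraph.mem_edgeFinset] using hp.2.2
  · rintro ⟨a, b⟩ ha ⟨c, d⟩ hc h
    simp only [mem_filter] at ha hc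
    rw [Sym2.mk_eq_mk_iff] at h
    rcases h with h | h
    · exact h
    · simp only [Prod.swap_prod_mk, Prod.mk.injEq] at h
      exfalso; rw [h.1, h.2] at ha; exact absurd hc.2.1 (not_lt.2 ha.2.1.le)
  · intro e he
    induction e with
    | _ x y =>
      rw [SimpleGraph.mem_edgeFinset, mem_edgeSet] at he
      rcases lt_or_gt_of_ne he.ne with h | h
      · exact ⟨(x, y), by simp [h, he], rfl⟩
      · exact ⟨(y, x), by simp [h, he.symm], Sym2.eq_swap⟩

lemma eCount_induce {n : ℕ} (G : SimpleGraph (Fin n)) (s : Set (Fin n)) [DecidablePred (· ∈ s)]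
    [DecidableRel G.Adj] :
    eCount (G.induce s) =
      ((univ ×ˢ univ).filter
        (fun p : Fin n × Fin n => p.1 < p.2 ∧ p.1 ∈ s ∧ p.2 ∈ s ∧ G.Adj p.1 p.2)).card := by
  classical
  rw [eCount_eq_card, card_edges_eq_lowPairs]
  refine Finset.card_bij (fun p _ => ((p.1 : Fin n), (p.2 : Fin n))) ?_ ?_ ?_
  · rintro ⟨⟨a, ha⟩, ⟨b, hb⟩⟩ hp
    simp only [mem_filter, mem_product, mem_univ, true_and] at hp ⊢
    exact ⟨hp.1, ha, hb, hp.2⟩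
  · rintro ⟨⟨a, ha⟩, ⟨b, hb⟩⟩ h1 ⟨⟨c, hc⟩, ⟨d, hd⟩⟩ h2 h
    simp only [Prod.mk.injEq] at h ⊢
    exact ⟨Subtype.ext h.1, Subtype.ext h.2⟩
  · rintro ⟨a, b⟩ hp
    simp only [mem_filter, mem_product, mem_univ, true_and] at hp
    exact ⟨(⟨⟨a, hp.2.1⟩, ⟨b, hp.2.2.1⟩⟩ : s × s), by
      simp only [mem_filter, mem_product, mem_univ, true_and]
      exact ⟨hp.1, hp.2.2.2⟩, rfl⟩

def Hgr {n : ℕ} (A : Finset (Fin n)) (D : SimpleGraph (Fin n)) (idx : Fin n → ℕ) (m : ℕ) :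
    SimpleGraph (Fin n) where
  Adj v w := (v ∈ A ∧ w ∈ A ∧ D.Adj v w) ∨ (v ∈ A ∧ w ∉ A) ∨ (v ∉ A ∧ w ∈ A) ∨
    (v ∉ A ∧ w ∉ A ∧ v ≠ w ∧ idx v / 2 = idx w / 2 ∧ idx v < 2 * m ∧ idx w < 2 * m)
  symm := by
    constructor
    rintro v w (⟨h1, h2, h3⟩ | ⟨h1, h2⟩ | ⟨h1, h2⟩ | ⟨h1, h2, h3, h4, h5, h6⟩)
    · exact Or.inl ⟨h2, h1, h3.symm⟩
    · exact Or.inr (Or.inr (Or.inl ⟨h2, h1⟩))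
    · exact Or.inr (Or.inl ⟨h2, h1⟩)
    · exact Or.inr (Or.inr (Or.inr ⟨h2, h1, h3.symm, h4.symm, h6, h5⟩))
  loopless := by
    constructor
    rintro v (⟨h1, h2, h3⟩ | ⟨h1, h2⟩ | ⟨h1, h2⟩ | ⟨h1, h2, h3, h4⟩)
    · exact D.loopless.irrefl v h3
    · exact h2 h1
    · exact h1 h2
    · exact h3 rfl

lemma eCount_Hgr {n q m : ℕ} (A : Finset (Fin n)) (D : SimpleGraph (Fin n))
    [DecidableRel D.Adj] (idx : Fin n → ℕ) (vtx : ℕ → Fin n)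
    (hq : Aᶜ.card = q) (hm : 2 * m ≤ q)
    (hvtx : ∀ j < q, vtx j ∉ A ∧ idx (vtx j) = j)
    (hidx : ∀ v ∉ A, idx v < q ∧ vtx (idx v) = v)
    (hmono : ∀ i j : ℕ, i < j → j < q → vtx i < vtx j) :
    eCount (Hgr A D idx m) =
      ((A ×ˢ A).filter (fun p => p.1 < p.2 ∧ D.Adj p.1 p.2)).card + A.card * q + m := by
  classical
  have hinj : ∀ v ∉ A, ∀ w ∉ A, idx v = idx w → v = w := by
    intro v hv w hw h
    rw [← (hidx v hv).2, ← (hidx w hw).2, h]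
  have hidxlt : ∀ v ∉ A, ∀ w ∉ A, v < w → idx v < idx w := by
    intro v hv w hw hvw
    rcases lt_trichotomy (idx v) (idx w) with h | h | h
    · exact h
    · exact absurd (hinj v hv w hw h) hvw.ne
    · have h2 := hmono _ _ h (hidx v hv).1
      rw [(hidx v hv).2, (hidx w hw).2] at h2
      exact absurd h2 (lt_asymm hvw)
  rw [eCount_eq_card, card_edges_eq_lowPairs]
  set S := ((univ ×ˢ univ).filter
    (fun p : Fin n × Fin n => p.1 < p.2 ∧ (Hgr A D idx m).Adj p.1 p.2)) with hS
  have h1 : (S.filter (fun p => p.1 ∈ A ∧ p.2 ∈ A)).card +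
      (S.filter (fun p => ¬(p.1 ∈ A ∧ p.2 ∈ A))).card = S.card :=
    Finset.card_filter_add_card_filter_not _
  have h2 : ((S.filter (fun p => ¬(p.1 ∈ A ∧ p.2 ∈ A))).filter
        (fun p => p.1 ∈ A ∨ p.2 ∈ A)).card +
      ((S.filter (fun p => ¬(p.1 ∈ A ∧ p.2 ∈ A))).filter
        (fun p => ¬(p.1 ∈ A ∨ p.2 ∈ A))).card =
      (S.filter (fun p => ¬(p.1 ∈ A ∧ p.2 ∈ A))).card :=
    Finset.card_filter_add_card_filter_not _
  -- part (i)
  have e1 : S.filter (fun p => p.1 ∈ A ∧ p.2 ∈ A) =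
      (A ×ˢ A).filter (fun p => p.1 < p.2 ∧ D.Adj p.1 p.2) := by
    ext ⟨a, b⟩
    simp only [hS, mem_filter, mem_product, mem_univ, true_and, Hgr.eq_1]
    constructor
    · rintro ⟨⟨hab, hadj⟩, ha, hb⟩
      refine ⟨⟨ha, hb⟩, hab, ?_⟩
      rcases hadj with ⟨-, -, h⟩ | ⟨-, h⟩ | ⟨h, -⟩ | ⟨h, -⟩ <;> first | exact h | exact absurd ha h | exact absurd hb h
    · rintro ⟨⟨ha, hb⟩, hab, hadj⟩
      exact ⟨⟨hab, Or.inl ⟨ha, hb, hadj⟩⟩, ha, hb⟩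
  -- part (ii)
  have e2 : ((S.filter (fun p => ¬(p.1 ∈ A ∧ p.2 ∈ A))).filter
      (fun p => p.1 ∈ A ∨ p.2 ∈ A)).card = A.card * q := by
    rw [← hq, ← Finset.card_product A Aᶜ]
    refine Finset.card_bij (fun p _ => if p.1 ∈ A then (p.1, p.2) else (p.2, p.1)) ?_ ?_ ?_
    · rintro ⟨a, b⟩ hp
      simp only [hS, mem_filter, mem_product, mem_univ, true_and] at hp
      obtain ⟨⟨⟨hab, hadj⟩, hno⟩, hor⟩ := hp
      by_cases ha : a ∈ A
      · have hb : b ∉ A := fun hb => hno ⟨ha, hb⟩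
        simp [ha, hb]
      · have hb : b ∈ A := by tauto
        simp [ha, hb]
    · rintro ⟨a, b⟩ h1' ⟨c, d⟩ h2' h
      simp only [hS, mem_filter, mem_product, mem_univ, true_and] at h1' h2'
      obtain ⟨⟨⟨hab, -⟩, hno1⟩, hor1⟩ := h1'
      obtain ⟨⟨⟨hcd, -⟩, hno2⟩, hor2⟩ := h2'
      by_cases ha : a ∈ A <;> by_cases hc : c ∈ A <;>
        simp only [ha, hc, if_true, if_false, Prod.mk.injEq] at h
      · exact Prod.ext h.1 h.2
      · exfalso; rw [h.1, h.2] at hab; exact absurd hcd (by simp [hab.le.not_gt])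
      · exfalso; rw [← h.1, ← h.2] at hcd; exact absurd hab (by simp [hcd.le.not_gt])
      · exact Prod.ext h.2 h.1
    · rintro ⟨a, u⟩ hp
      simp only [mem_product, Finset.mem_compl] at hp
      obtain ⟨ha, hu⟩ := hp
      have hadj : (Hgr A D idx m).Adj a u := Or.inr (Or.inl ⟨ha, hu⟩)
      have hne : a ≠ u := fun h => hu (h ▸ ha)
      rcases lt_or_gt_of_ne hne with h | h
      · refine ⟨(a, u), ?_, by simp [ha]⟩
        simp only [hS, mem_filter, mem_product, mem_univ, true_and]
        exact ⟨⟨⟨h, hadj⟩, fun hh => hu hh.2⟩, Or.inl ha⟩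
      · refine ⟨(u, a), ?_, by simp [ha, hu]⟩
        simp only [hS, mem_filter, mem_product, mem_univ, true_and]
        exact ⟨⟨⟨h, hadj.symm⟩, fun hh => hu hh.1⟩, Or.inr ha⟩
  -- part (iii)
  have e3 : ((S.filter (fun p => ¬(p.1 ∈ A ∧ p.2 ∈ A))).filter
      (fun p => ¬(p.1 ∈ A ∨ p.2 ∈ A))).card = m := by
    rw [← Finset.card_range m]
    refine Finset.card_bij (fun p _ => idx p.1 / 2) ?_ ?_ ?_
    · rintro ⟨a, b⟩ hp
      simp only [hS, mem_filter, mem_product, mem_univ, true_and] at hp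
      obtain ⟨⟨⟨hab, hadj⟩, -⟩, hor⟩ := hp
      push_neg at hor
      rcases hadj with ⟨h, -⟩ | ⟨h, -⟩ | ⟨-, h⟩ | ⟨-, -, -, -, h5, -⟩
      · exact absurd h hor.1
      · exact absurd h hor.1
      · exact absurd h hor.2
      · simp only [mem_range]; omega
    · rintro ⟨a, b⟩ h1' ⟨c, d⟩ h2' h
      simp only [hS, mem_filter, mem_product, mem_univ, true_and] at h1' h2'
      obtain ⟨⟨⟨hab, hadj1⟩, -⟩, hor1⟩ := h1'
      obtain ⟨⟨⟨hcd, hadj2⟩, -⟩, hor2⟩ := h2'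
      push_neg at hor1 hor2
      obtain ⟨ha, hb⟩ := hor1
      obtain ⟨hc, hd⟩ := hor2
      have had1 : idx a / 2 = idx b / 2 ∧ idx a < 2*m ∧ idx b < 2*m := by
        rcases hadj1 with ⟨h, -⟩ | ⟨h, -⟩ | ⟨-, h⟩ | ⟨-, -, -, h4, h5, h6⟩ <;>
          first | exact absurd h ha | exact absurd h hb | exact ⟨h4, h5, h6⟩
      have had2 : idx c / 2 = idx d / 2 ∧ idx c < 2*m ∧ idx d < 2*m := by
        rcases hadj2 with ⟨h, -⟩ | ⟨h, -⟩ | ⟨-, h⟩ | ⟨-, -, -, h4, h5, h6⟩ <;>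
          first | exact absurd h hc | exact absurd h hd | exact ⟨h4, h5, h6⟩
      have l1 := hidxlt a ha b hb hab
      have l2 := hidxlt c hc d hd hcd
      dsimp only at h
      have : idx a = idx c ∧ idx b = idx d := by omega
      exact Prod.ext (hinj a ha c hc this.1) (hinj b hb d hd this.2)
    · intro c hc
      simp only [mem_range] at hc
      have h1' : 2 * c < q := by omega
      have h2' : 2 * c + 1 < q := by omega
      obtain ⟨hA1, hi1⟩ := hvtx _ h1'
      obtain ⟨hA2, hi2⟩ := hvtx _ h2'
      have hlt : vtx (2 * c) < vtx (2 * c + 1) := hmono _ _ (by omega) h2'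
      refine ⟨(vtx (2 * c), vtx (2 * c + 1)), ?_, ?_⟩
      · simp only [hS, mem_filter, mem_product, mem_univ, true_and]
        exact ⟨⟨⟨hlt, Or.inr (Or.inr (Or.inr ⟨hA1, hA2, hlt.ne, by omega, by omega, by omega⟩))⟩,
          fun hh => hA1 hh.1⟩, fun hh => hh.elim hA1 hA2⟩
      · dsimp only
        rw [hi1]
        omega
  rw [e1] at h1
  omega

lemma Hgr_kp3_free {n k m : ℕ} (A : Finset (Fin n)) (D : SimpleGraph (Fin n))
    (idx : Fin n → ℕ) (hA : A.card = k - 1) (hk : 2 ≤ k)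
    (hinj : ∀ v ∉ A, ∀ w ∉ A, idx v = idx w → v = w) :
    ¬ GContains (Hgr A D idx m) (kPaths k 3) := by
  rintro ⟨f, hf⟩
  have key : ∀ i : Fin k, ∃ t : Fin 3, f (i, t) ∈ A := by
    intro i
    by_contra hno
    push_neg at hno
    have h01 : (Hgr A D idx m).Adj (f (i, 1)) (f (i, 0)) :=
      hf _ _ (And.intro rfl (Or.inr rfl))
    have h12 : (Hgr A D idx m).Adj (f (i, 1)) (f (i, 2)) :=
      hf _ _ (And.intro rfl (Or.inl rfl))
    have hn0 := hno 0
    have hn1 := hno 1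
    have hn2 := hno 2
    have e01 : idx (f (i, 1)) / 2 = idx (f (i, 0)) / 2 ∧ idx (f (i, 1)) < 2 * m ∧
        idx (f (i, 0)) < 2 * m := by
      rcases h01 with ⟨h, -⟩ | ⟨h, -⟩ | ⟨-, h⟩ | ⟨-, -, -, h4, h5, h6⟩ <;>
        first | exact absurd h hn1 | exact absurd h hn0 | exact ⟨h4, h5, h6⟩
    have e12 : idx (f (i, 1)) / 2 = idx (f (i, 2)) / 2 := by
      rcases h12 with ⟨h, -⟩ | ⟨h, -⟩ | ⟨-, h⟩ | ⟨-, -, -, h4, -⟩ <;>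
        first | exact absurd h hn1 | exact absurd h hn2 | exact h4
    have d01 : idx (f (i, 1)) ≠ idx (f (i, 0)) := fun h =>
      (by simp : ((i, 1) : Fin k × Fin 3) ≠ (i, 0)) (f.injective (hinj _ hn1 _ hn0 h))
    have d12 : idx (f (i, 1)) ≠ idx (f (i, 2)) := fun h =>
      (by simp : ((i, 1) : Fin k × Fin 3) ≠ (i, 2)) (f.injective (hinj _ hn1 _ hn2 h))
    have d02 : idx (f (i, 0)) ≠ idx (f (i, 2)) := fun h =>
      (by simp : ((i, 0) : Fin k × Fin 3) ≠ (i, 2)) (f.injective (hinj _ hn0 _ hn2 h))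
    omega
  classical
  choose t ht using key
  have hinj2 : Function.Injective (fun i : Fin k => f (i, t i)) := by
    intro i j hij
    have := f.injective hij
    exact congrArg Prod.fst this
  have hsub : (univ.image (fun i : Fin k => f (i, t i))) ⊆ A := by
    intro v hv
    simp only [mem_image] at hv
    obtain ⟨i, -, rfl⟩ := hv
    exact ht i
  have hcard := Finset.card_le_card hsub
  rw [Finset.card_image_of_injective _ hinj2, Finset.card_univ, Fintype.card_fin] at hcard
  omega

lemma Hgr_bot_F_free {VF : Type*} [Fintype VF] (F : SimpleGraph VF)
    {n q m : ℕ} (A : Finset (Fin n)) (idx : Fin n → ℕ)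
    (hidx : ∀ v ∉ A, idx v < q) (hinj : ∀ v ∉ A, ∀ w ∉ A, idx v = idx w → v = w)
    (hq : q ≤ 2 * m + 1)
    (hσ : ∀ m' : ℕ, ¬ GContains (joinIM (Fintype.card VF) m') F) :
    ¬ GContains (Hgr A ⊥ idx m) F := by
  rintro ⟨f, hf⟩
  classical
  have hcle : Fintype.card {v : VF // f v ∈ A} ≤ Fintype.card (Fin (Fintype.card VF)) := by
    rw [Fintype.card_fin]; exact Fintype.card_subtype_le _
  obtain ⟨ι⟩ := Function.Embedding.nonempty_of_card_le hcle
  have hb : ∀ v : VF, f v ∉ A → idx (f v) < 2 * (m + 1) := by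
    intro v hv; have := hidx _ hv; omega
  set g : VF → Fin (Fintype.card VF) ⊕ Fin (2 * (m + 1)) :=
    fun v => if h : f v ∈ A then Sum.inl (ι ⟨v, h⟩) else Sum.inr ⟨idx (f v), hb v h⟩ with hg
  have ginj : Function.Injective g := by
    intro v w h
    simp only [hg] at h
    by_cases hv : f v ∈ A <;> by_cases hw : f w ∈ A <;>
      simp only [hv, hw, dif_pos, dif_neg, not_false_iff] at h
    · have := ι.injective (Sum.inl.inj h)
      exact congrArg Subtype.val this
    · exact absurd h (by simp)
    · exact absurd h (by simp)
    · have : idx (f v) = idx (f w) := congrArg Fin.val (Sum.inr.inj h)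
      exact f.injective (hinj _ hv _ hw this)
  refine hσ (m + 1) ⟨⟨g, ginj⟩, ?_⟩
  intro a b hab
  have hadj := hf a b hab
  simp only [Function.Embedding.coeFn_mk, hg]
  by_cases ha : f a ∈ A <;> by_cases hbm : f b ∈ A <;>
    simp only [ha, hbm, dif_pos, dif_neg, not_false_iff]
  · rcases hadj with ⟨-, -, h3⟩ | ⟨-, h2⟩ | ⟨h1, -⟩ | ⟨h1, -⟩
    · exact h3.elim
    · exact absurd hbm h2
    · exact absurd ha h1
    · exact absurd ha h1
  · trivial
  · trivial
  · have hlast : f a ≠ f b ∧ idx (f a) / 2 = idx (f b) / 2 := by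
      rcases hadj with ⟨h, -⟩ | ⟨h, -⟩ | ⟨-, h⟩ | ⟨-, -, h3, h4, -⟩ <;>
        first | exact absurd h ha | exact absurd h hbm | exact ⟨h3, h4⟩
    refine ⟨fun hEq => hlast.1 (hinj _ ha _ hbm (congrArg Fin.val hEq)), hlast.2⟩

lemma Hgr_G_F_free {VF : Type*} [Fintype VF] (F : SimpleGraph VF)
    {n m : ℕ} (G : SimpleGraph (Fin n)) [DecidableRel G.Adj] (A : Finset (Fin n))
    (idx : Fin n → ℕ)
    (hinj : ∀ v ∉ A, ∀ w ∉ A, idx v = idx w → v = w)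
    (hS1 : ∀ u x' z' : Fin n, u ∉ A → x' ∉ A → z' ∉ A → G.Adj u x' → G.Adj u z' → x' = z')
    (GP : Finset (Fin n × Fin n))
    (hGPmem : ∀ p ∈ GP, p.1 ∉ A ∧ p.2 ∉ A ∧ p.1 < p.2 ∧ G.Adj p.1 p.2 ∧
      ∀ a ∈ A, G.Adj p.1 a ∧ G.Adj p.2 a)
    (hGPcard : Fintype.card VF ≤ GP.card)
    (hFfree : ¬ GContains G F) :
    ¬ GContains (Hgr A G idx m) F := by
  rintro ⟨f, hf⟩
  classical
  have hdisj : ∀ p ∈ GP, ∀ p' ∈ GP, p ≠ p' →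
      p.1 ≠ p'.1 ∧ p.1 ≠ p'.2 ∧ p.2 ≠ p'.1 ∧ p.2 ≠ p'.2 := by
    intro p hp p' hp' hne
    obtain ⟨a1, a2, alt, aadj, -⟩ := hGPmem p hp
    obtain ⟨b1, b2, blt, badj, -⟩ := hGPmem p' hp'
    refine ⟨?_, ?_, ?_, ?_⟩ <;> intro h
    · exact hne (Prod.ext h (hS1 p.1 p.2 p'.2 a1 a2 b2 aadj (h ▸ badj)))
    · have h2 : p.2 = p'.1 := hS1 p.1 p.2 p'.1 a1 a2 b1 aadj (h ▸ badj.symm)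
      rw [h] at alt; rw [h2] at alt
      exact absurd blt (by omega)
    · have h2 : p.1 = p'.2 := hS1 p.2 p.1 p'.2 a2 a1 b2 aadj.symm (h ▸ badj)
      rw [h2] at alt; rw [h] at alt
      exact absurd blt (by omega)
    · exact hne (Prod.ext (hS1 p.2 p.1 p'.1 a2 a1 b1 aadj.symm (h ▸ badj.symm)) h)
  set usedC : Finset ℕ :=
    ((univ : Finset VF).filter (fun v => f v ∉ A)).image (fun v => idx (f v) / 2) with husedC
  have hcle : Fintype.card {c // c ∈ usedC} ≤ Fintype.card {p // p ∈ GP} := by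
    rw [Fintype.card_coe, Fintype.card_coe]
    refine le_trans (le_trans Finset.card_image_le ?_) hGPcard
    exact le_trans (Finset.card_filter_le _ _) (by simp)
  obtain ⟨ψ⟩ := Function.Embedding.nonempty_of_card_le hcle
  have memC : ∀ v : VF, f v ∉ A → idx (f v) / 2 ∈ usedC := fun v h =>
    Finset.mem_image.2 ⟨v, Finset.mem_filter.2 ⟨Finset.mem_univ v, h⟩, rfl⟩
  set g : VF → Fin n := fun v =>
    if h : f v ∈ A then f v
    else if idx (f v) % 2 = 0 then ((ψ ⟨idx (f v) / 2, memC v h⟩ : Fin n × Fin n)).1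
    else ((ψ ⟨idx (f v) / 2, memC v h⟩ : Fin n × Fin n)).2 with hgdef
  have hgA : ∀ v : VF, f v ∈ A → g v = f v := by
    intro v h; simp only [hgdef, dif_pos h]
  have hgO : ∀ v : VF, ∀ h : f v ∉ A,
      g v = (ψ ⟨idx (f v) / 2, memC v h⟩ : Fin n × Fin n).1 ∨
      g v = (ψ ⟨idx (f v) / 2, memC v h⟩ : Fin n × Fin n).2 := by
    intro v h
    simp only [hgdef, dif_neg h]
    split
    · exact Or.inl rfl
    · exact Or.inr rfl
  have hgO1 : ∀ v : VF, ∀ h : f v ∉ A, idx (f v) % 2 = 0 →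
      g v = (ψ ⟨idx (f v) / 2, memC v h⟩ : Fin n × Fin n).1 := by
    intro v h hp; simp only [hgdef, dif_neg h, if_pos hp]
  have hgO2 : ∀ v : VF, ∀ h : f v ∉ A, idx (f v) % 2 ≠ 0 →
      g v = (ψ ⟨idx (f v) / 2, memC v h⟩ : Fin n × Fin n).2 := by
    intro v h hp; simp only [hgdef, dif_neg h, if_neg hp]
  have hψmem : ∀ (c : ℕ) (hc : c ∈ usedC), ((ψ ⟨c, hc⟩ : Fin n × Fin n)) ∈ GP := fun c hc =>
    (ψ ⟨c, hc⟩).2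
  -- outside images are outside A
  have hgOA : ∀ v : VF, f v ∉ A → g v ∉ A := by
    intro v h
    obtain ⟨p1, p2, -⟩ := hGPmem _ (hψmem _ (memC v h))
    rcases hgO v h with he | he <;> rw [he]
    · exact p1
    · exact p2
  have ginj : Function.Injective g := by
    intro v w h
    by_cases hv : f v ∈ A <;> by_cases hw : f w ∈ A
    · rw [hgA v hv, hgA w hw] at h; exact f.injective h
    · exact absurd (show g w ∈ A by rw [← h, hgA v hv]; exact hv) (hgOA w hw)
    · exact absurd (show g v ∈ A by rw [h, hgA w hw]; exact hw) (hgOA v hv)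
    · by_cases hc : idx (f v) / 2 = idx (f w) / 2
      · have hsame : (⟨idx (f v) / 2, memC v hv⟩ : {c // c ∈ usedC}) =
            ⟨idx (f w) / 2, memC w hw⟩ := Subtype.ext hc
        by_cases hpv : idx (f v) % 2 = 0 <;> by_cases hpw : idx (f w) % 2 = 0
        · have : idx (f v) = idx (f w) := by omega
          exact f.injective (hinj _ hv _ hw this)
        · rw [hgO1 v hv hpv, hgO2 w hw hpw, ← hsame] at h
          obtain ⟨-, -, hlt, -⟩ := hGPmem _ (hψmem _ (memC v hv))
          exact absurd h (by intro hh; rw [hh] at hlt; exact lt_irrefl _ hlt)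
        · rw [hgO2 v hv hpv, hgO1 w hw hpw, ← hsame] at h
          obtain ⟨-, -, hlt, -⟩ := hGPmem _ (hψmem _ (memC v hv))
          exact absurd h.symm (by intro hh; rw [hh] at hlt; exact lt_irrefl _ hlt)
        · have : idx (f v) = idx (f w) := by omega
          exact f.injective (hinj _ hv _ hw this)
      · exfalso
        have hψne : (ψ ⟨idx (f v) / 2, memC v hv⟩ : Fin n × Fin n) ≠
            (ψ ⟨idx (f w) / 2, memC w hw⟩ : Fin n × Fin n) := by
          intro hh
          exact hc (congrArg Subtype.val (ψ.injective (Subtype.ext hh)))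
        obtain ⟨d1, d2, d3, d4⟩ := hdisj _ (hψmem _ (memC v hv)) _ (hψmem _ (memC w hw)) hψne
        rcases hgO v hv with he | he <;> rcases hgO w hw with he' | he' <;>
          rw [he, he'] at h
        · exact d1 h
        · exact d2 h
        · exact d3 h
        · exact d4 h
  refine hFfree ⟨⟨g, ginj⟩, ?_⟩
  intro a b hab
  simp only [Function.Embedding.coeFn_mk]
  have hadj := hf a b hab
  by_cases ha : f a ∈ A <;> by_cases hb : f b ∈ A
  · rw [hgA a ha, hgA b hb]
    rcases hadj with ⟨-, -, h3⟩ | ⟨-, h2⟩ | ⟨h1, -⟩ | ⟨h1, -⟩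
    · exact h3
    · exact absurd hb h2
    · exact absurd ha h1
    · exact absurd ha h1
  · rw [hgA a ha]
    obtain ⟨-, -, -, -, hall⟩ := hGPmem _ (hψmem _ (memC b hb))
    rcases hgO b hb with he | he <;> rw [he]
    · exact ((hall _ ha).1).symm
    · exact ((hall _ ha).2).symm
  · rw [hgA b hb]
    obtain ⟨-, -, -, -, hall⟩ := hGPmem _ (hψmem _ (memC a ha))
    rcases hgO a ha with he | he <;> rw [he]
    · exact (hall _ hb).1
    · exact (hall _ hb).2
  · have hlast : f a ≠ f b ∧ idx (f a) / 2 = idx (f b) / 2 := by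
      rcases hadj with ⟨h, -⟩ | ⟨h, -⟩ | ⟨-, h⟩ | ⟨-, -, h3, h4, -⟩ <;>
        first | exact absurd h ha | exact absurd h hb | exact ⟨h3, h4⟩
    have hidxne : idx (f a) ≠ idx (f b) := fun hh => hlast.1 (hinj _ ha _ hb hh)
    have hsame : (⟨idx (f a) / 2, memC a ha⟩ : {c // c ∈ usedC}) =
        ⟨idx (f b) / 2, memC b hb⟩ := Subtype.ext hlast.2
    obtain ⟨-, -, -, hadj', -⟩ := hGPmem _ (hψmem _ (memC a ha))
    by_cases hpa : idx (f a) % 2 = 0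
    · have hpb : idx (f b) % 2 ≠ 0 := by omega
      rw [hgO1 a ha hpa, hgO2 b hb hpb, ← hsame]
      exact hadj'
    · have hpb : idx (f b) % 2 = 0 := by omega
      rw [hgO2 a ha hpa, hgO1 b hb hpb, ← hsame]
      exact hadj'.symm

lemma outside_P3_free {n k : ℕ} (G : SimpleGraph (Fin n)) [DecidableRel G.Adj]
    (A : Finset (Fin n)) (hk : 2 ≤ k) (hA : A.card = k - 1)
    (hdeg : ∀ a ∈ A, k ^ 2 + k + 1 ≤ (G.neighborFinset a).card)
    (hfree : ¬ GContains G (kPaths k 3))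
    (u x z : Fin n) (hu : u ∉ A) (hx : x ∉ A) (hz : z ∉ A)
    (hux : G.Adj u x) (huz : G.Adj u z) (hxz : x ≠ z) : False := by
  classical
  set ctr : ℕ → Fin n := fun i => if h : i < k - 1 then ((A.orderIsoOfFin hA) ⟨i, h⟩ : Fin n)
    else u with hctr
  have hctrA : ∀ i, i < k - 1 → ctr i ∈ A := by
    intro i h
    simp only [hctr, dif_pos h]
    exact ((A.orderIsoOfFin hA) ⟨i, h⟩).2
  have hctrinj : ∀ i j, i < k - 1 → j < k - 1 → ctr i = ctr j → i = j := by
    intro i j hi hj h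
    simp only [hctr, dif_pos hi, dif_pos hj] at h
    have := (A.orderIsoOfFin hA).injective (Subtype.ext h)
    exact congrArg Fin.val this
  -- the greedy construction
  have main : ∀ j, j ≤ k - 1 → ∃ g : ℕ → Fin n × Fin n, ∀ i, i < j →
      G.Adj (ctr i) (g i).1 ∧ G.Adj (ctr i) (g i).2 ∧ (g i).1 ≠ (g i).2 ∧
      (g i).1 ∉ A ∧ (g i).2 ∉ A ∧
      (g i).1 ∉ ({u, x, z} : Finset (Fin n)) ∧ (g i).2 ∉ ({u, x, z} : Finset (Fin n)) ∧
      ∀ i', i' < i → (g i).1 ≠ (g i').1 ∧ (g i).1 ≠ (g i').2 ∧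
        (g i).2 ≠ (g i').1 ∧ (g i).2 ≠ (g i').2 := by
    intro j
    induction j with
    | zero => exact fun _ => ⟨fun _ => (u, u), fun i hi => absurd hi (Nat.not_lt_zero i)⟩
    | succ j ih =>
      intro hj1
      obtain ⟨g, hg⟩ := ih (by omega)
      have hjlt : j < k - 1 := by omega
      set a := ctr j with ha
      have haA : a ∈ A := hctrA j hjlt
      set Bad : Finset (Fin n) := A ∪ {u, x, z} ∪ (range j).image (fun i => (g i).1) ∪
        (range j).image (fun i => (g i).2) with hBad
      have hBadcard : Bad.card ≤ (k - 1) + 3 + j + j := by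
        refine le_trans (card_union_le _ _) ?_
        have h1 : (A ∪ {u, x, z} ∪ (range j).image (fun i => (g i).1)).card ≤ (k - 1) + 3 + j := by
          refine le_trans (card_union_le _ _) ?_
          have h2 : (A ∪ {u, x, z}).card ≤ (k - 1) + 3 := by
            refine le_trans (card_union_le _ _) ?_
            have : ({u, x, z} : Finset (Fin n)).card ≤ 3 := by
              refine le_trans (card_insert_le _ _) ?_
              refine Nat.succ_le_succ (le_trans (card_insert_le _ _) ?_)
              simp
            omega
          have := card_image_le (s := range j) (f := fun i => (g i).1)
          rw [card_range] at this
          omega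
        have := card_image_le (s := range j) (f := fun i => (g i).2)
        rw [card_range] at this
        omega
      have hNB : 2 ≤ (G.neighborFinset a \ Bad).card := by
        have h1 := Finset.le_card_sdiff Bad (G.neighborFinset a)
        have h2 := hdeg a haA
        have : j ≤ k - 2 := by omega
        have hk2 : (k - 1) + 3 + j + j ≤ 3 * k - 1 := by omega
        have hsq : 2 * k ≤ k ^ 2 := by nlinarith
        omega
      obtain ⟨w1, hw1⟩ := Finset.card_pos.1 (by omega : 0 < (G.neighborFinset a \ Bad).card)
      have hNB2 : 1 ≤ (G.neighborFinset a \ (Bad ∪ {w1})).card := by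
        have h1 := Finset.le_card_sdiff (Bad ∪ {w1}) (G.neighborFinset a)
        have h2 := hdeg a haA
        have h3 : (Bad ∪ {w1}).card ≤ Bad.card + 1 := by
          refine le_trans (card_union_le _ _) ?_; simp
        have : j ≤ k - 2 := by omega
        have hk2 : (k - 1) + 3 + j + j ≤ 3 * k - 1 := by omega
        have hsq : 2 * k ≤ k ^ 2 := by nlinarith
        omega
      obtain ⟨w2, hw2⟩ := Finset.card_pos.1 (by omega : 0 < (G.neighborFinset a \ (Bad ∪ {w1})).card)
      rw [Finset.mem_sdiff] at hw1 hw2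
      rw [Finset.mem_union] at hw2
      push_neg at hw2
      have hw1n : G.Adj a w1 := (SimpleGraph.mem_neighborFinset _ _ _).1 hw1.1
      have hw2n : G.Adj a w2 := (SimpleGraph.mem_neighborFinset _ _ _).1 hw2.1
      have hw1B := hw1.2
      have hw2B := hw2.2.1
      have hw12 : w1 ≠ w2 := by
        intro h; exact hw2.2.2 (by simp [h])
      refine ⟨fun i => if i = j then (w1, w2) else g i, ?_⟩
      intro i hi
      rcases Nat.lt_succ_iff_lt_or_eq.1 hi with hlt | rfl
      · have hne : i ≠ j := by omega
        simp only [if_neg hne]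
        obtain ⟨c1, c2, c3, c4, c5, c6, c7, c8⟩ := hg i hlt
        refine ⟨c1, c2, c3, c4, c5, c6, c7, ?_⟩
        intro i' hi'
        have : i' ≠ j := by omega
        simp only [if_neg this]
        exact c8 i' hi'
      · simp only [if_pos rfl]
        have hmemB : ∀ v, v ∈ A ∨ v ∈ ({u, x, z} : Finset (Fin n)) ∨
            (∃ i' < i, v = (g i').1) ∨ (∃ i' < i, v = (g i').2) → v ∈ Bad := by
          intro v hv
          simp only [hBad, mem_union, mem_image, mem_range]
          rcases hv with h | h | ⟨i', hi', rfl⟩ | ⟨i', hi', rfl⟩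
          · exact Or.inl (Or.inl (Or.inl h))
          · exact Or.inl (Or.inl (Or.inr h))
          · exact Or.inl (Or.inr ⟨i', hi', rfl⟩)
          · exact Or.inr ⟨i', hi', rfl⟩
        refine ⟨hw1n, hw2n, hw12, ?_, ?_, ?_, ?_, ?_⟩
        · exact fun h => hw1B (hmemB _ (Or.inl h))
        · exact fun h => hw2B (hmemB _ (Or.inl h))
        · exact fun h => hw1B (hmemB _ (Or.inr (Or.inl h)))
        · exact fun h => hw2B (hmemB _ (Or.inr (Or.inl h)))
        · intro i' hi'
          have hne : i' ≠ i := by omega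
          simp only [if_neg hne]
          refine ⟨fun h => hw1B (hmemB _ (Or.inr (Or.inr (Or.inl ⟨i', hi', h⟩)))),
            fun h => hw1B (hmemB _ (Or.inr (Or.inr (Or.inr ⟨i', hi', h⟩)))),
            fun h => hw2B (hmemB _ (Or.inr (Or.inr (Or.inl ⟨i', hi', h⟩)))),
            fun h => hw2B (hmemB _ (Or.inr (Or.inr (Or.inr ⟨i', hi', h⟩))))⟩
  obtain ⟨g, hg⟩ := main (k - 1) le_rfl
  -- assemble the embedding of kPaths k 3
  set f : Fin k × Fin 3 → Fin n := fun p =>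
    if h : (p.1 : ℕ) < k - 1 then
      ![(g (p.1 : ℕ)).1, ctr (p.1 : ℕ), (g (p.1 : ℕ)).2] p.2
    else ![x, u, z] p.2 with hfdef
  have hval : ∀ (i : Fin k) (hi : (i : ℕ) < k - 1),
      f (i, 0) = (g (i : ℕ)).1 ∧ f (i, 1) = ctr (i : ℕ) ∧ f (i, 2) = (g (i : ℕ)).2 := by
    intro i hi
    refine ⟨?_, ?_, ?_⟩ <;> simp only [hfdef] <;> rw [dif_pos hi] <;> simp
  have hval2 : ∀ (i : Fin k), ¬ ((i : ℕ) < k - 1) →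
      f (i, 0) = x ∧ f (i, 1) = u ∧ f (i, 2) = z := by
    intro i hi
    refine ⟨?_, ?_, ?_⟩ <;> simp only [hfdef] <;> rw [dif_neg hi] <;> simp
  have hxzu : u ≠ x := fun h => G.irrefl (h ▸ hux)
  have hzu : u ≠ z := fun h => G.irrefl (h ▸ huz)
  have hxuzB : ∀ i, i < k - 1 → (g i).1 ≠ u ∧ (g i).1 ≠ x ∧ (g i).1 ≠ z ∧
      (g i).2 ≠ u ∧ (g i).2 ≠ x ∧ (g i).2 ≠ z := by
    intro i hi
    obtain ⟨-, -, -, -, -, c6, c7, -⟩ := hg i hi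
    simp only [mem_insert, mem_singleton] at c6 c7
    push_neg at c6 c7
    exact ⟨c6.1, c6.2.1, c6.2.2, c7.1, c7.2.1, c7.2.2⟩
  have hgA : ∀ i, i < k - 1 → (g i).1 ∉ A ∧ (g i).2 ∉ A := by
    intro i hi
    obtain ⟨-, -, -, c4, c5, -⟩ := hg i hi
    exact ⟨c4, c5⟩
  have hcross : ∀ i i', i < k - 1 → i' < k - 1 → i ≠ i' →
      (g i).1 ≠ (g i').1 ∧ (g i).1 ≠ (g i').2 ∧ (g i).2 ≠ (g i').1 ∧ (g i).2 ≠ (g i').2 := by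
    intro i i' hi hi' hne
    rcases Nat.lt_or_ge i i' with h | h
    · obtain ⟨-, -, -, -, -, -, -, c8⟩ := hg i' hi'
      obtain ⟨d1, d2, d3, d4⟩ := c8 i h
      exact ⟨d1.symm, d3.symm, d2.symm, d4.symm⟩
    · obtain ⟨-, -, -, -, -, -, -, c8⟩ := hg i hi
      exact c8 i' (by omega)
  have fin3 : ∀ t : Fin 3, t = 0 ∨ t = 1 ∨ t = 2 := by decide
  have hlast : ∀ i : Fin k, ¬ ((i : ℕ) < k - 1) → (i : ℕ) = k - 1 := by
    intro i hi
    have := i.isLt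
    omega
  have hc3 : ∀ i, i < k - 1 → (g i).1 ≠ (g i).2 := by
    intro i hi
    exact (hg i hi).2.2.1
  have hadj1 : ∀ i, i < k - 1 → G.Adj (ctr i) (g i).1 := fun i hi => (hg i hi).1
  have hadj2 : ∀ i, i < k - 1 → G.Adj (ctr i) (g i).2 := fun i hi => (hg i hi).2.1
  clear hg main
  have hfinj : Function.Injective f := by
    rintro ⟨i, t⟩ ⟨i', t'⟩ h
    by_cases hi : (i : ℕ) < k - 1 <;> by_cases hi' : (i' : ℕ) < k - 1
    · obtain ⟨v1, v2, v3⟩ := hval i hi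
      obtain ⟨w1, w2, w3⟩ := hval i' hi'
      by_cases hii : (i : ℕ) = (i' : ℕ)
      · have hie : i = i' := Fin.ext hii
        subst hie
        refine Prod.ext rfl ?_
        rcases fin3 t with rfl | rfl | rfl <;> rcases fin3 t' with rfl | rfl | rfl <;>
            first
          | rfl
          | (rw [v1, w2] at h; exact absurd (h ▸ hctrA _ hi) ((hgA _ hi).1))
          | (rw [v2, w1] at h; exact absurd (h.symm ▸ hctrA _ hi) ((hgA _ hi).1))
          | (rw [v1, w3] at h; exact absurd h (hc3 _ hi))
          | (rw [v3, w1] at h; exact absurd h.symm (hc3 _ hi))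
          | (rw [v2, w3] at h; exact absurd (h ▸ hctrA _ hi) ((hgA _ hi).2))
          | (rw [v3, w2] at h; exact absurd (h.symm ▸ hctrA _ hi) ((hgA _ hi).2))
      · exfalso
        obtain ⟨d1, d2, d3, d4⟩ := hcross _ _ hi hi' hii
        rcases fin3 t with rfl | rfl | rfl <;> rcases fin3 t' with rfl | rfl | rfl
        · rw [v1, w1] at h; exact d1 h
        · rw [v1, w2] at h; exact (hgA _ hi).1 (h ▸ hctrA _ hi')
        · rw [v1, w3] at h; exact d2 h
        · rw [v2, w1] at h; exact (hgA _ hi').1 (h.symm ▸ hctrA _ hi)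
        · rw [v2, w2] at h; exact hii (hctrinj _ _ hi hi' h)
        · rw [v2, w3] at h; exact (hgA _ hi').2 (h.symm ▸ hctrA _ hi)
        · rw [v3, w1] at h; exact d3 h
        · rw [v3, w2] at h; exact (hgA _ hi).2 (h ▸ hctrA _ hi')
        · rw [v3, w3] at h; exact d4 h
    · exfalso
      obtain ⟨v1, v2, v3⟩ := hval i hi
      obtain ⟨w1, w2, w3⟩ := hval2 i' hi'
      obtain ⟨b1, b2, b3, b4, b5, b6⟩ := hxuzB _ hi
      rcases fin3 t with rfl | rfl | rfl <;> rcases fin3 t' with rfl | rfl | rfl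
      · rw [v1, w1] at h; exact b2 h
      · rw [v1, w2] at h; exact b1 h
      · rw [v1, w3] at h; exact b3 h
      · rw [v2, w1] at h; exact hx (h ▸ hctrA _ hi)
      · rw [v2, w2] at h; exact hu (h ▸ hctrA _ hi)
      · rw [v2, w3] at h; exact hz (h ▸ hctrA _ hi)
      · rw [v3, w1] at h; exact b5 h
      · rw [v3, w2] at h; exact b4 h
      · rw [v3, w3] at h; exact b6 h
    · exfalso
      obtain ⟨v1, v2, v3⟩ := hval2 i hi
      obtain ⟨w1, w2, w3⟩ := hval i' hi'
      obtain ⟨b1, b2, b3, b4, b5, b6⟩ := hxuzB _ hi'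
      rcases fin3 t with rfl | rfl | rfl <;> rcases fin3 t' with rfl | rfl | rfl
      · rw [v1, w1] at h; exact b2 h.symm
      · rw [v1, w2] at h; exact hx (h.symm ▸ hctrA _ hi')
      · rw [v1, w3] at h; exact b5 h.symm
      · rw [v2, w1] at h; exact b1 h.symm
      · rw [v2, w2] at h; exact hu (h.symm ▸ hctrA _ hi')
      · rw [v2, w3] at h; exact b4 h.symm
      · rw [v3, w1] at h; exact b3 h.symm
      · rw [v3, w2] at h; exact hz (h.symm ▸ hctrA _ hi')
      · rw [v3, w3] at h; exact b6 h.symm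
    · have hie : i = i' := Fin.ext (by rw [hlast i hi, hlast i' hi'])
      subst hie
      refine Prod.ext rfl ?_
      obtain ⟨v1, v2, v3⟩ := hval2 i hi
      rcases fin3 t with rfl | rfl | rfl <;> rcases fin3 t' with rfl | rfl | rfl <;>
          first
        | rfl
        | (rw [v1, v2] at h; exact absurd h.symm hxzu)
        | (rw [v2, v1] at h; exact absurd h hxzu)
        | (rw [v1, v3] at h; exact absurd h hxz)
        | (rw [v3, v1] at h; exact absurd h.symm hxz)
        | (rw [v2, v3] at h; exact absurd h hzu)
        | (rw [v3, v2] at h; exact absurd h.symm hzu)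
  refine hfree ⟨⟨f, hfinj⟩, ?_⟩
  rintro ⟨i, t⟩ ⟨i', t'⟩ hadjk
  obtain ⟨heq, hcons⟩ : (i, t).1 = (i', t').1 ∧ (((i, t).2 : ℕ) + 1 = ((i', t').2 : ℕ) ∨
    ((i', t').2 : ℕ) + 1 = ((i, t).2 : ℕ)) := hadjk
  simp only [Function.Embedding.coeFn_mk]
  dsimp only at heq hcons
  subst heq
  by_cases hi : (i : ℕ) < k - 1
  · obtain ⟨v1, v2, v3⟩ := hval i hi
    rcases fin3 t with rfl | rfl | rfl <;> rcases fin3 t' with rfl | rfl | rfl <;>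
      simp only [Fin.val_zero, Fin.val_one, Fin.val_two] at hcons <;>
        first
      | omega
      | (rw [v1, v2]; exact (hadj1 _ hi).symm)
      | (rw [v2, v1]; exact hadj1 _ hi)
      | (rw [v2, v3]; exact hadj2 _ hi)
      | (rw [v3, v2]; exact (hadj2 _ hi).symm)
  · obtain ⟨v1, v2, v3⟩ := hval2 i hi
    rcases fin3 t with rfl | rfl | rfl <;> rcases fin3 t' with rfl | rfl | rfl <;>
      simp only [Fin.val_zero, Fin.val_one, Fin.val_two] at hcons <;>
        first
      | omega
      | (rw [v1, v2]; exact hux.symm)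
      | (rw [v2, v1]; exact hux)
      | (rw [v2, v3]; exact huz)
      | (rw [v3, v2]; exact huz.symm)

lemma eCount_split {n : ℕ} (G : SimpleGraph (Fin n)) [DecidableRel G.Adj]
    (A : Finset (Fin n)) :
    eCount G = ((A ×ˢ A).filter (fun p => p.1 < p.2 ∧ G.Adj p.1 p.2)).card
      + ((A ×ˢ Aᶜ).filter (fun p => G.Adj p.1 p.2)).card
      + ((univ ×ˢ univ).filter
          (fun p : Fin n × Fin n => p.1 ∉ A ∧ p.2 ∉ A ∧ p.1 < p.2 ∧ G.Adj p.1 p.2)).card := by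
  classical
  rw [eCount_eq_card, card_edges_eq_lowPairs]
  set S := ((univ ×ˢ univ).filter
    (fun p : Fin n × Fin n => p.1 < p.2 ∧ G.Adj p.1 p.2)) with hS
  have h1 : (S.filter (fun p => p.1 ∈ A ∧ p.2 ∈ A)).card +
      (S.filter (fun p => ¬(p.1 ∈ A ∧ p.2 ∈ A))).card = S.card :=
    Finset.card_filter_add_card_filter_not _
  have h2 : ((S.filter (fun p => ¬(p.1 ∈ A ∧ p.2 ∈ A))).filter
        (fun p => p.1 ∈ A ∨ p.2 ∈ A)).card +
      ((S.filter (fun p => ¬(p.1 ∈ A ∧ p.2 ∈ A))).filter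
        (fun p => ¬(p.1 ∈ A ∨ p.2 ∈ A))).card =
      (S.filter (fun p => ¬(p.1 ∈ A ∧ p.2 ∈ A))).card :=
    Finset.card_filter_add_card_filter_not _
  have e1 : S.filter (fun p => p.1 ∈ A ∧ p.2 ∈ A) =
      (A ×ˢ A).filter (fun p => p.1 < p.2 ∧ G.Adj p.1 p.2) := by
    ext ⟨a, b⟩
    simp only [hS, mem_filter, mem_product, mem_univ, true_and]
    tauto
  have e3 : (S.filter (fun p => ¬(p.1 ∈ A ∧ p.2 ∈ A))).filter
        (fun p => ¬(p.1 ∈ A ∨ p.2 ∈ A)) =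
      (univ ×ˢ univ).filter
        (fun p : Fin n × Fin n => p.1 ∉ A ∧ p.2 ∉ A ∧ p.1 < p.2 ∧ G.Adj p.1 p.2) := by
    ext ⟨a, b⟩
    simp only [hS, mem_filter, mem_product, mem_univ, true_and]
    tauto
  have e2 : ((S.filter (fun p => ¬(p.1 ∈ A ∧ p.2 ∈ A))).filter
      (fun p => p.1 ∈ A ∨ p.2 ∈ A)).card =
      ((A ×ˢ Aᶜ).filter (fun p => G.Adj p.1 p.2)).card := by
    refine Finset.card_bij (fun p _ => if p.1 ∈ A then (p.1, p.2) else (p.2, p.1)) ?_ ?_ ?_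
    · rintro ⟨a, b⟩ hp
      simp only [hS, mem_filter, mem_product, mem_univ, true_and] at hp
      obtain ⟨⟨⟨hab, hadj⟩, hno⟩, hor⟩ := hp
      by_cases ha : a ∈ A
      · have hb : b ∉ A := fun hb => hno ⟨ha, hb⟩
        simp only [if_pos ha, mem_filter, mem_product, Finset.mem_compl]
        exact ⟨⟨ha, hb⟩, hadj⟩
      · have hb : b ∈ A := by tauto
        simp only [if_neg ha, mem_filter, mem_product, Finset.mem_compl]
        exact ⟨⟨hb, ha⟩, hadj.symm⟩
    · rintro ⟨a, b⟩ h1' ⟨c, d⟩ h2' h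
      simp only [hS, mem_filter, mem_product, mem_univ, true_and] at h1' h2'
      obtain ⟨⟨⟨hab, -⟩, hno1⟩, hor1⟩ := h1'
      obtain ⟨⟨⟨hcd, -⟩, hno2⟩, hor2⟩ := h2'
      by_cases ha : a ∈ A <;> by_cases hc : c ∈ A <;>
        simp only [ha, hc, if_true, if_false, Prod.mk.injEq] at h
      · exact Prod.ext h.1 h.2
      · exfalso; rw [h.1, h.2] at hab; exact absurd hcd (by simp [hab.le.not_gt])
      · exfalso; rw [← h.1, ← h.2] at hcd; exact absurd hab (by simp [hcd.le.not_gt])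
      · exact Prod.ext h.2 h.1
    · rintro ⟨a, u⟩ hp
      simp only [mem_filter, mem_product, Finset.mem_compl] at hp
      obtain ⟨⟨ha, hu⟩, hadj⟩ := hp
      rcases lt_or_gt_of_ne hadj.ne with h | h
      · refine ⟨(a, u), ?_, by simp [ha]⟩
        simp only [hS, mem_filter, mem_product, mem_univ, true_and]
        exact ⟨⟨⟨h, hadj⟩, fun hh => hu hh.2⟩, Or.inl ha⟩
      · refine ⟨(u, a), ?_, by simp [ha, hu]⟩
        simp only [hS, mem_filter, mem_product, mem_univ, true_and]
        exact ⟨⟨⟨h, hadj.symm⟩, fun hh => hu hh.1⟩, Or.inr ha⟩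
  rw [e1] at h1
  rw [e3] at h2
  omega

end Helpers

/-- Lemma 3.2: structure of an extremal `{kP₃, F}`-free graph when `σ(F) = ∞`. -/
theorem extremal_structure_sigma_infinite {VF : Type*} [Fintype VF]
    (F : SimpleGraph VF) (k n : ℕ) (hk : 2 ≤ k)
    (hχ : 3 ≤ F.chromaticNumber)
    (hσ : ∀ m : ℕ, ¬ GContains (joinIM (Fintype.card VF) m) F)
    (hn : 9 * (k ^ 2 + k + 1) + 2 * Fintype.card VF ≤ n)
    (G : SimpleGraph (Fin n))
    (hfree : ¬ GContains G (kPaths k 3) ∧ ¬ GContains G F)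
    (hext : eCount G =
      exNum n (fun G' => ¬ GContains G' (kPaths k 3) ∧ ¬ GContains G' F))
    (A : Finset (Fin n)) (hA : A.card = k - 1)
    (hdeg : ∀ v ∈ A, (n : ℚ) / 9 ≤ ((G.neighborSet v).ncard : ℚ)) :
    (∀ v : Fin n, v ∉ A → ∀ a ∈ A, G.Adj v a) ∧
      eCount (G.induce (↑A : Set (Fin n))ᶜ) = (n - k + 1) / 2 := by
  classical
  obtain ⟨hfree1, hfree2⟩ := hfree
  have hkk : k ^ 2 = k * k := sq k
  have hkle : k ≤ k ^ 2 := by nlinarith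
  have hvF0 : 0 ≤ Fintype.card VF := Nat.zero_le _
  have hkn : k ≤ n := by omega
  have hn0 : 0 < n := by omega
  set q := Aᶜ.card with hqdef
  have hqval : q = n - k + 1 := by
    rw [hqdef, Finset.card_compl, hA, Fintype.card_fin]; omega
  set m := q / 2 with hm
  have h2m : 2 * m ≤ q := by omega
  have hq2m1 : q ≤ 2 * m + 1 := by omega
  set oiso := Aᶜ.orderIsoOfFin hqdef.symm with hoiso
  set idx : Fin n → ℕ := fun v => if h : v ∈ Aᶜ then ((oiso.symm ⟨v, h⟩ : Fin q) : ℕ) else 0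
    with hidxdef
  set vtx : ℕ → Fin n := fun j => if h : j < q then (oiso ⟨j, h⟩ : Fin n) else ⟨0, hn0⟩
    with hvtxdef
  have hvtx : ∀ j < q, vtx j ∉ A ∧ idx (vtx j) = j := by
    intro j hj
    have hmem : (oiso ⟨j, hj⟩ : Fin n) ∈ Aᶜ := (oiso ⟨j, hj⟩).2
    refine ⟨?_, ?_⟩
    · simp only [hvtxdef, dif_pos hj]
      exact Finset.mem_compl.1 hmem
    · simp only [hvtxdef, hidxdef, dif_pos hj, dif_pos hmem]
      have he : (⟨(oiso ⟨j, hj⟩ : Fin n), hmem⟩ : {x // x ∈ Aᶜ}) = oiso ⟨j, hj⟩ :=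
        Subtype.ext rfl
      rw [he, OrderIso.symm_apply_apply]
  have hidx : ∀ v : Fin n, v ∉ A → idx v < q ∧ vtx (idx v) = v := by
    intro v hv
    have hmem : v ∈ Aᶜ := Finset.mem_compl.2 hv
    have hlt : ((oiso.symm ⟨v, hmem⟩ : Fin q) : ℕ) < q := (oiso.symm ⟨v, hmem⟩).isLt
    refine ⟨?_, ?_⟩
    · simp only [hidxdef, dif_pos hmem]
      exact hlt
    · simp only [hidxdef, dif_pos hmem, hvtxdef]
      rw [dif_pos hlt]
      have he : (⟨((oiso.symm ⟨v, hmem⟩ : Fin q) : ℕ), hlt⟩ : Fin q) = oiso.symm ⟨v, hmem⟩ :=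
        Fin.ext rfl
      rw [he, OrderIso.apply_symm_apply]
  have hmono : ∀ i j : ℕ, i < j → j < q → vtx i < vtx j := by
    intro i j hij hj
    have hi : i < q := lt_trans hij hj
    simp only [hvtxdef, dif_pos hi, dif_pos hj]
    exact oiso.strictMono (show (⟨i, hi⟩ : Fin q) < ⟨j, hj⟩ from hij)
  have hinj : ∀ v ∉ A, ∀ w ∉ A, idx v = idx w → v = w := by
    intro v hv w hw h
    rw [← (hidx v hv).2, ← (hidx w hw).2, h]
  have hdeg' : ∀ a ∈ A, k ^ 2 + k + 1 ≤ (G.neighborFinset a).card := by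
    intro a ha
    have h1 := hdeg a ha
    have h2 : (G.neighborSet a).ncard = (G.neighborFinset a).card := by
      rw [Set.ncard_eq_toFinset_card']
      rfl
    rw [h2] at h1
    have h3 : ((k ^ 2 + k + 1 : ℕ) : ℚ) ≤ (((G.neighborFinset a).card : ℕ) : ℚ) := by
      refine le_trans ?_ h1
      rw [le_div_iff₀ (by norm_num : (0 : ℚ) < 9)]
      have h4 : ((9 * (k ^ 2 + k + 1) + 2 * Fintype.card VF : ℕ) : ℚ) ≤ (n : ℚ) :=
        Nat.cast_le.2 hn
      push_cast at h4 ⊢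
      nlinarith [h4]
    exact_mod_cast h3
  have hS1 : ∀ u x z : Fin n, u ∉ A → x ∉ A → z ∉ A → G.Adj u x → G.Adj u z → x = z := by
    intro u x z hu hx hz hux huz
    by_contra hxz
    exact outside_P3_free G A hk hA hdeg' hfree1 u x z hu hx hz hux huz hxz
  have key : ∀ H : SimpleGraph (Fin n),
      (¬ GContains H (kPaths k 3) ∧ ¬ GContains H F) → eCount H ≤ eCount G := by
    intro H hH
    rw [hext]
    refine le_csSup ⟨Fintype.card (Sym2 (Fin n)), ?_⟩ ⟨H, hH, rfl⟩
    rintro y ⟨G', -, rfl⟩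
    rw [eCount_eq_card]
    exact Finset.card_le_univ _
  set cA := ((A ×ˢ A).filter (fun p => p.1 < p.2 ∧ G.Adj p.1 p.2)).card with hcA
  set J := ((A ×ˢ Aᶜ).filter (fun p => G.Adj p.1 p.2)) with hJ
  set OP := ((Finset.univ ×ˢ Finset.univ).filter
    (fun p : Fin n × Fin n => p.1 ∉ A ∧ p.2 ∉ A ∧ p.1 < p.2 ∧ G.Adj p.1 p.2)) with hOP
  have hsplit : eCount G = cA + J.card + OP.card := eCount_split G A
  have hcAle : cA ≤ k ^ 2 := by
    have h1 := Finset.card_filter_le (A ×ˢ A)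
      (fun p : Fin n × Fin n => p.1 < p.2 ∧ G.Adj p.1 p.2)
    rw [Finset.card_product, hA] at h1
    have h2 : (k - 1) * (k - 1) ≤ k * k :=
      Nat.mul_le_mul (Nat.sub_le _ _) (Nat.sub_le _ _)
    omega
  have hJle : J.card ≤ (k - 1) * q := by
    have h1 := Finset.card_filter_le (A ×ˢ Aᶜ) (fun p : Fin n × Fin n => G.Adj p.1 p.2)
    rwa [Finset.card_product, hA, ← hqdef] at h1
  have hOPdisj : ∀ p ∈ OP, ∀ p' ∈ OP, p ≠ p' →
      p.1 ≠ p'.1 ∧ p.1 ≠ p'.2 ∧ p.2 ≠ p'.1 ∧ p.2 ≠ p'.2 := by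
    intro p hp p' hp' hne
    simp only [hOP, Finset.mem_filter, Finset.mem_product, Finset.mem_univ, true_and] at hp hp'
    obtain ⟨a1, a2, alt, aadj⟩ := hp
    obtain ⟨b1, b2, blt, badj⟩ := hp'
    refine ⟨?_, ?_, ?_, ?_⟩ <;> intro h
    · exact hne (Prod.ext h (hS1 p.1 p.2 p'.2 a1 a2 b2 aadj (h ▸ badj)))
    · have h2 : p.2 = p'.1 := hS1 p.1 p.2 p'.1 a1 a2 b1 aadj (h ▸ badj.symm)
      rw [h] at alt; rw [h2] at alt
      exact absurd blt (by omega)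
    · have h2 : p.1 = p'.2 := hS1 p.2 p.1 p'.2 a2 a1 b2 aadj.symm (h ▸ badj)
      rw [h2] at alt; rw [h] at alt
      exact absurd blt (by omega)
    · exact hne (Prod.ext (hS1 p.2 p.1 p'.1 a2 a1 b1 aadj.symm (h ▸ badj.symm)) h)
  have hOle : OP.card ≤ m := by
    have hdisj2 : ∀ p ∈ OP, ∀ p' ∈ OP, p ≠ p' →
        Disjoint ({p.1, p.2} : Finset (Fin n)) ({p'.1, p'.2} : Finset (Fin n)) := by
      intro p hp p' hp' hne
      obtain ⟨d1, d2, d3, d4⟩ := hOPdisj p hp p' hp' hne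
      rw [Finset.disjoint_left]
      intro a ha ha'
      simp only [Finset.mem_insert, Finset.mem_singleton] at ha ha'
      rcases ha with rfl | rfl <;> rcases ha' with h | h <;> tauto
    have hbi := Finset.card_biUnion hdisj2
    have hsum : ∑ p ∈ OP, ({p.1, p.2} : Finset (Fin n)).card = 2 * OP.card := by
      have hc2 : ∀ p ∈ OP, ({p.1, p.2} : Finset (Fin n)).card = 2 := by
        intro p hp
        simp only [hOP, Finset.mem_filter, Finset.mem_product, Finset.mem_univ, true_and] at hp
        rw [Finset.card_insert_of_notMem (by simp [hp.2.2.1.ne]), Finset.card_singleton]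
      rw [Finset.sum_congr rfl hc2, Finset.sum_const, smul_eq_mul, mul_comm]
    have hsub : OP.biUnion (fun p => ({p.1, p.2} : Finset (Fin n))) ⊆ Aᶜ := by
      intro v hv
      simp only [Finset.mem_biUnion] at hv
      obtain ⟨p, hp, hv⟩ := hv
      simp only [hOP, Finset.mem_filter, Finset.mem_product, Finset.mem_univ, true_and] at hp
      simp only [Finset.mem_insert, Finset.mem_singleton] at hv
      rcases hv with rfl | rfl
      · exact Finset.mem_compl.2 hp.1
      · exact Finset.mem_compl.2 hp.2.1
    have hcard := Finset.card_le_card hsub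
    rw [hbi, hsum] at hcard
    rw [← hqdef] at hcard
    omega
  have hH1 : eCount (Hgr A ⊥ idx m) = 0 + (k - 1) * q + m := by
    rw [eCount_Hgr A ⊥ idx vtx hqdef.symm h2m hvtx hidx hmono, hA]
    congr 1
    congr 1
    rw [Finset.card_eq_zero]
    ext ⟨a, b⟩
    simp
  have hH1free : ¬ GContains (Hgr A ⊥ idx m) (kPaths k 3) ∧ ¬ GContains (Hgr A ⊥ idx m) F :=
    ⟨Hgr_kp3_free A ⊥ idx hA hk hinj,
      Hgr_bot_F_free F A idx (fun v hv => (hidx v hv).1) hinj hq2m1 hσ⟩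
  have hlow := key _ hH1free
  rw [hH1, hsplit] at hlow
  set GP := OP.filter (fun p => ∀ a ∈ A, G.Adj p.1 a ∧ G.Adj p.2 a) with hGP
  have hGPmem : ∀ p ∈ GP, p.1 ∉ A ∧ p.2 ∉ A ∧ p.1 < p.2 ∧ G.Adj p.1 p.2 ∧
      ∀ a ∈ A, G.Adj p.1 a ∧ G.Adj p.2 a := by
    intro p hp
    simp only [hGP, hOP, Finset.mem_filter, Finset.mem_product, Finset.mem_univ,
      true_and] at hp
    exact ⟨hp.1.1, hp.1.2.1, hp.1.2.2.1, hp.1.2.2.2, hp.2⟩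
  have hGPcard : Fintype.card VF ≤ GP.card := by
    have hsplit2 : GP.card +
        (OP.filter (fun p => ¬ ∀ a ∈ A, G.Adj p.1 a ∧ G.Adj p.2 a)).card = OP.card :=
      Finset.card_filter_add_card_filter_not _
    set BP := OP.filter (fun p => ¬ ∀ a ∈ A, G.Adj p.1 a ∧ G.Adj p.2 a) with hBP
    have hwit : ∀ p ∈ BP, ∃ pr : Fin n × Fin n,
        pr ∈ (A ×ˢ Aᶜ) \ J ∧ (pr.2 = p.1 ∨ pr.2 = p.2) := by
      intro p hp
      simp only [hBP, Finset.mem_filter] at hp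
      obtain ⟨hpOP, hbad⟩ := hp
      push_neg at hbad
      obtain ⟨a, ha, hnadj⟩ := hbad
      simp only [hOP, Finset.mem_filter, Finset.mem_product, Finset.mem_univ,
        true_and] at hpOP
      obtain ⟨h1, h2, -, -⟩ := hpOP
      by_cases hpa : G.Adj p.1 a
      · refine ⟨(a, p.2), Finset.mem_sdiff.2 ⟨Finset.mem_product.2 ⟨ha, Finset.mem_compl.2 h2⟩,
          ?_⟩, Or.inr rfl⟩
        simp only [hJ, Finset.mem_filter]
        rintro ⟨-, hadj⟩
        exact (hnadj hpa) hadj.symm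
      · refine ⟨(a, p.1), Finset.mem_sdiff.2 ⟨Finset.mem_product.2 ⟨ha, Finset.mem_compl.2 h1⟩,
          ?_⟩, Or.inl rfl⟩
        simp only [hJ, Finset.mem_filter]
        rintro ⟨-, hadj⟩
        exact hpa hadj.symm
    choose wit hwit1 hwit2 using hwit
    have hBPle : BP.card ≤ ((A ×ˢ Aᶜ) \ J).card := by
      refine Finset.card_le_card_of_injOn
        (fun p => if hp : p ∈ BP then wit p hp else p) (fun p hp => ?_) ?_
      · simp only [dif_pos hp]
        simp only [Finset.mem_coe] at hp
        rw [dif_pos hp]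
        exact hwit1 p hp
      · intro p hp p' hp' heq
        simp only [Finset.mem_coe] at hp hp'
        simp only [dif_pos hp, dif_pos hp'] at heq
        by_contra hne
        have hBPsub : BP ⊆ OP := Finset.filter_subset _ _
        obtain ⟨d1, d2, d3, d4⟩ := hOPdisj p (hBPsub hp) p' (hBPsub hp') hne
        have h2 := hwit2 p hp
        have h2' := hwit2 p' hp'
        rw [heq] at h2
        rcases h2 with h | h <;> rcases h2' with h' | h' <;> rw [h] at h' <;> tauto
    have hsdc : ((A ×ˢ Aᶜ) \ J).card + J.card = (A ×ˢ Aᶜ).card :=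
      Finset.card_sdiff_add_card_eq_card (Finset.filter_subset _ _)
    rw [Finset.card_product, hA, ← hqdef] at hsdc
    have hmbig : k ^ 2 + Fintype.card VF ≤ m := by omega
    omega
  have hH2 : eCount (Hgr A G idx m) = cA + (k - 1) * q + m := by
    rw [eCount_Hgr A G idx vtx hqdef.symm h2m hvtx hidx hmono, hA, ← hcA]
  have hH2free : ¬ GContains (Hgr A G idx m) (kPaths k 3) ∧ ¬ GContains (Hgr A G idx m) F :=
    ⟨Hgr_kp3_free A G idx hA hk hinj,
      Hgr_G_F_free F G A idx hinj hS1 GP hGPmem hGPcard hfree2⟩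
  have hup := key _ hH2free
  rw [hH2, hsplit] at hup
  have hJeq : J.card = (k - 1) * q := by omega
  have hOeq : OP.card = m := by omega
  constructor
  · intro v hv a ha
    have hJfull : J = A ×ˢ Aᶜ := by
      refine Finset.eq_of_subset_of_card_le (Finset.filter_subset _ _) ?_
      rw [hJeq, Finset.card_product, hA, ← hqdef]
    have hmem : (a, v) ∈ A ×ˢ Aᶜ :=
      Finset.mem_product.2 ⟨ha, Finset.mem_compl.2 hv⟩
    rw [← hJfull] at hmem
    exact ((Finset.mem_filter.1 hmem).2 : G.Adj a v).symm
  · rw [eCount_induce G ((↑A : Set (Fin n))ᶜ)]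
    have hset : ((Finset.univ ×ˢ Finset.univ).filter
        (fun p : Fin n × Fin n => p.1 < p.2 ∧ p.1 ∈ ((↑A : Set (Fin n))ᶜ) ∧
          p.2 ∈ ((↑A : Set (Fin n))ᶜ) ∧ G.Adj p.1 p.2)) = OP := by
      ext ⟨a, b⟩
      simp only [hOP, Finset.mem_filter, Finset.mem_product, Finset.mem_univ, true_and,
        Set.mem_compl_iff, Finset.mem_coe]
      tauto
    rw [hset, hOeq]
    omega
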